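/- The map d : ℝⁿ → ℝ≥0 defined by d(x₁,…,xₙ) = max_{i=1,…,n-1}(x₍ᵢ₊₁₎ − x₍ᵢ₎), where x₍ᵢ₎ denotes the i-th smallest value among x₁,…,xₙ, is an n-distance on ℝ (for n ≥ 2): it is zero iff all arguments are equal, symmetric, and satisfies the simplex inequality. -/

import Mathlib

open Finset Function

/-- `d` is an `n`-distance: nonnegative, vanishing exactly on constant tuples,
symmetric, and satisfying the simplex inequality. -/
structure IsNDistance {X : Type*} {n : ℕ} (d : (Fin n → X) → ℝ) : Prop where
  nonneg : ∀ x, 0 ≤ d x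
  eq_zero_iff : ∀ x, d x = 0 ↔ ∀ i j : Fin n, x i = x j
  symm : ∀ (x : Fin n → X) (σ : Equiv.Perm (Fin n)), d (x ∘ σ) = d x
  simplex : ∀ (x : Fin n → X) (z : X), d x ≤ ∑ i, d (Function.update x i z)

/-- The largest gap between consecutive order statistics. -/
noncomputable def largestGap {n : ℕ} (x : Fin (n + 2) → ℝ) : ℝ :=
  ⨆ i : Fin (n + 1), (x (Tuple.sort x i.succ) - x (Tuple.sort x i.castSucc))

namespace LargestGapAux

variable {n : ℕ}

lemma gap_le (x : Fin (n+2) → ℝ) (i : Fin (n+1)) :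
    x (Tuple.sort x i.succ) - x (Tuple.sort x i.castSucc) ≤ largestGap x := by
  unfold largestGap
  exact le_ciSup (f := fun i : Fin (n+1) =>
    x (Tuple.sort x i.succ) - x (Tuple.sort x i.castSucc))
    (Set.Finite.bddAbove (Set.finite_range _)) i

lemma gap_nonneg (x : Fin (n+2) → ℝ) (i : Fin (n+1)) :
    0 ≤ x (Tuple.sort x i.succ) - x (Tuple.sort x i.castSucc) :=
  sub_nonneg.2 (Tuple.monotone_sort x (Fin.castSucc_lt_succ (i := i)).le)

lemma lg_nonneg (x : Fin (n+2) → ℝ) : 0 ≤ largestGap x :=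
  le_trans (gap_nonneg x 0) (gap_le x 0)

lemma key (y : Fin (n+2) → ℝ) (u v : ℝ)
    (hp : ∃ p, y p ≤ u) (hq : ∃ q, v ≤ y q)
    (hsep : ∀ r, y r ≤ u ∨ v ≤ y r) : v - u ≤ largestGap y := by
  rcases le_or_gt v u with h | h
  · linarith [lg_nonneg y]
  obtain ⟨p, hpu⟩ := hp
  obtain ⟨q, hqv⟩ := hq
  have hmono : Monotone (y ∘ Tuple.sort y) := Tuple.monotone_sort y
  set T : Finset (Fin (n+2)) := Finset.univ.filter (fun i => y (Tuple.sort y i) ≤ u) with hT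
  have hpT : (Tuple.sort y)⁻¹ p ∈ T := by
    simp only [hT, Finset.mem_filter, Finset.mem_univ, true_and]
    simpa using hpu
  have hTne : T.Nonempty := ⟨_, hpT⟩
  set i := T.max' hTne with hi
  have hiT : i ∈ T := T.max'_mem hTne
  have hiu : y (Tuple.sort y i) ≤ u := by
    simpa only [hT, Finset.mem_filter, Finset.mem_univ, true_and] using hiT
  have hq' : v ≤ y (Tuple.sort y ((Tuple.sort y)⁻¹ q)) := by simpa using hqv
  have hine : i ≠ Fin.last (n+1) := by
    intro hlast
    have : y (Tuple.sort y ((Tuple.sort y)⁻¹ q)) ≤ y (Tuple.sort y i) :=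
      hmono (hlast ▸ Fin.le_last _)
    linarith
  set j := i.castPred hine with hj
  have hji : j.castSucc = i := Fin.castSucc_castPred i hine
  have hsucc : ¬ y (Tuple.sort y j.succ) ≤ u := by
    intro hle
    have : j.succ ∈ T := by
      simp only [hT, Finset.mem_filter, Finset.mem_univ, true_and]; exact hle
    have := T.le_max' _ this
    rw [← hi] at this
    exact absurd (lt_of_lt_of_le (hji ▸ Fin.castSucc_lt_succ (i := j)) this) (lt_irrefl _)
  have hsv : v ≤ y (Tuple.sort y j.succ) := (hsep _).resolve_left hsucc
  have : v - u ≤ y (Tuple.sort y j.succ) - y (Tuple.sort y j.castSucc) := by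
    rw [hji]; linarith
  exact this.trans (gap_le y j)

end LargestGapAux

open LargestGapAux in
/-- The length of a largest inner interval is an $n$-distance on $ℝ$ ($n ≥ 2$). -/
theorem largestGap_isNDistance (n : ℕ) :
    IsNDistance (largestGap (n := n)) := by
  constructor
  · exact lg_nonneg
  · intro x
    constructor
    · intro h
      have hgap : ∀ i : Fin (n+1),
          x (Tuple.sort x i.succ) = x (Tuple.sort x i.castSucc) := by
        intro i
        have h1 := gap_le x i
        have h2 := gap_nonneg x i
        rw [h] at h1
        linarith
      have hconst : ∀ i : Fin (n+2), x (Tuple.sort x i) = x (Tuple.sort x 0) := by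
        intro i
        induction i using Fin.induction with
        | zero => rfl
        | succ i ih => rw [hgap i, ih]
      intro i j
      have hi := hconst ((Tuple.sort x)⁻¹ i)
      have hj := hconst ((Tuple.sort x)⁻¹ j)
      simp only [Equiv.Perm.inv_def, Equiv.apply_symm_apply] at hi hj
      rw [hi, hj]
    · intro h
      have : ∀ i : Fin (n+1),
          x (Tuple.sort x i.succ) - x (Tuple.sort x i.castSucc) = (0:ℝ) :=
        fun i => sub_eq_zero.2 (h _ _)
      unfold largestGap
      simp only [this]
      exact ciSup_const
  · intro x σ
    have h := Tuple.comp_perm_comp_sort_eq_comp_sort (σ := σ) (f := x)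
    unfold largestGap
    congr 1
    funext i
    have h1 := congrFun h i.succ
    have h2 := congrFun h i.castSucc
    simp only [Function.comp_apply] at h1 h2
    simp only [Function.comp_apply]
    rw [h1, h2]
  · intro x z
    obtain ⟨i0, hi0⟩ := Finite.exists_max
      (fun i : Fin (n+1) => x (Tuple.sort x i.succ) - x (Tuple.sort x i.castSucc))
    have hx_le : largestGap x ≤
        x (Tuple.sort x i0.succ) - x (Tuple.sort x i0.castSucc) := ciSup_le hi0
    set j := Tuple.sort x i0.castSucc with hjdef
    set k := Tuple.sort x i0.succ with hkdef
    set a := x j with hadef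
    set b := x k with hbdef
    have hab : a ≤ b := Tuple.monotone_sort x (Fin.castSucc_lt_succ (i := i0)).le
    have hjk : j ≠ k := by
      intro hE
      exact absurd ((Tuple.sort x).injective hE)
        (Fin.castSucc_lt_succ (i := i0)).ne
    have hsep : ∀ r, x r ≤ a ∨ b ≤ x r := by
      intro r
      have hr : x r = x (Tuple.sort x ((Tuple.sort x)⁻¹ r)) := by simp
      rcases le_or_gt ((Tuple.sort x)⁻¹ r) i0.castSucc with hc | hc
      · left; rw [hr]; exact Tuple.monotone_sort x hc
      · right; rw [hr]
        exact Tuple.monotone_sort x (Fin.castSucc_lt_iff_succ_le.mp hc)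
    have hd : ∀ i, 0 ≤ largestGap (update x i z) := fun i => lg_nonneg _
    have hmain : b - a ≤ largestGap (update x j z) + largestGap (update x k z) := by
      rcases le_total z a with hza | hza
      · have h1 : b - a ≤ largestGap (update x j z) := by
          apply key _ a b ⟨j, by simp [hza]⟩ ⟨k, by simp [update_of_ne hjk.symm, hbdef]⟩
          intro r
          by_cases hr : r = j
          · left; rw [hr]; simpa using hza
          · rw [update_of_ne hr]; exact hsep r
        linarith [hd k]
      · rcases le_total z b with hzb | hzb
        · have h1 : b - z ≤ largestGap (update x j z) := by
            apply key _ z b ⟨j, by simp⟩ ⟨k, by simp [update_of_ne hjk.symm, hbdef]⟩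
            intro r
            by_cases hr : r = j
            · left; rw [hr]; simp
            · rw [update_of_ne hr]
              rcases hsep r with h' | h'
              · left; linarith
              · right; exact h'
          have h2 : z - a ≤ largestGap (update x k z) := by
            apply key _ a z ⟨j, by simp [update_of_ne hjk, hadef]⟩ ⟨k, by simp⟩
            intro r
            by_cases hr : r = k
            · right; rw [hr]; simp
            · rw [update_of_ne hr]
              rcases hsep r with h' | h'
              · left; exact h'
              · right; linarith
          linarith
        · have h1 : b - a ≤ largestGap (update x k z) := by
            apply key _ a b ⟨j, by simp [update_of_ne hjk, hadef]⟩ ⟨k, by simp [hzb]⟩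
            intro r
            by_cases hr : r = k
            · right; rw [hr]; simpa using hzb
            · rw [update_of_ne hr]; exact hsep r
          linarith [hd j]
    calc largestGap x ≤ b - a := hx_le
      _ ≤ largestGap (update x j z) + largestGap (update x k z) := hmain
      _ = ∑ i ∈ ({j, k} : Finset (Fin (n+2))), largestGap (update x i z) :=
          (Finset.sum_pair (f := fun i => largestGap (update x i z)) hjk).symm
      _ ≤ ∑ i, largestGap (update x i z) :=
          Finset.sum_le_sum_of_subset_of_nonneg (Finset.subset_univ _)
            (fun i _ _ => hd i)
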